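/- Let U ⊆ ℝⁿ, n ≥ 2, be a strictly starlike domain and define R : S^{n−1} → (0, +∞] by R(θ) = sup{ρ ≥ 0 : ρθ ∈ U}. Then R is continuous, where [0, +∞] carries the order topology. -/

import Mathlib

open Metric Set Filter Topology MeasureTheory
open scoped NNReal ENNReal

noncomputable section

abbrev Euc (k : ℕ) := EuclideanSpace ℝ (Fin k)

/-- Second directional derivative of `u` at `x`, twice in the direction `v`. -/
def DirDeriv2 {X : Type*} [NormedAddCommGroup X] [NormedSpace ℝ X]
    (u : X → ℝ) (v : X) (x : X) : ℝ :=
  fderiv ℝ (fun y => fderiv ℝ u y v) x v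

/-- Mixed second derivative of `u` at `x` in the directions `v`, `w`. -/
def MixedDeriv2 {X : Type*} [NormedAddCommGroup X] [NormedSpace ℝ X]
    (u : X → ℝ) (v w : X) (x : X) : ℝ :=
  fderiv ℝ (fun y => fderiv ℝ u y w) x v

/-- The Euclidean Laplacian. -/
def EucLap {k : ℕ} (u : Euc k → ℝ) (x : Euc k) : ℝ :=
  ∑ i, DirDeriv2 u (EuclideanSpace.single i 1) x

/-- `u` is (classically) harmonic on the open set `U` : it is `C²` and `Δ u = 0` on `U`. -/
def HarmOn {k : ℕ} (u : Euc k → ℝ) (U : Set (Euc k)) : Prop :=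
  IsOpen U ∧ ContDiffOn ℝ 2 u U ∧ ∀ x ∈ U, EucLap u x = 0

/-- `u : Euc k → EReal` is superharmonic on the open set `W`: it is lower semicontinuous,
`> -∞`, not `≡ +∞` on any component, and dominates on every ball every harmonic function
which it dominates on the boundary sphere (the classical comparison characterization of
distributional `Δ u ≤ 0`). -/
def SuperharmOn {k : ℕ} (u : Euc k → EReal) (W : Set (Euc k)) : Prop :=
  IsOpen W ∧ LowerSemicontinuousOn u W ∧ (∀ x ∈ W, u x ≠ ⊥) ∧
    (∀ x ∈ W, ∃ y ∈ connectedComponentIn W x, u y ≠ ⊤) ∧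
    ∀ (x : Euc k) (r : ℝ), 0 < r → closedBall x r ⊆ W →
      ∀ h : Euc k → ℝ, ContinuousOn h (closedBall x r) → HarmOn h (ball x r) →
        (∀ y ∈ sphere x r, (h y : EReal) ≤ u y) →
        ∀ y ∈ ball x r, (h y : EReal) ≤ u y

/-- A set `A ⊆ ℝᵏ` is polar: some superharmonic function on an open `W ⊇ A`
is `+∞` on all of `A`. -/
def EucPolar {k : ℕ} (A : Set (Euc k)) : Prop :=
  ∃ (W : Set (Euc k)) (u : Euc k → EReal),
    IsOpen W ∧ A ⊆ W ∧ SuperharmOn u W ∧ ∀ x ∈ A, u x = ⊤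

/-- A set `A` is thin at `y`. -/
def EucThinAt {k : ℕ} (A : Set (Euc k)) (y : Euc k) : Prop :=
  y ∉ closure (A \ {y}) ∨
    ∃ W : Set (Euc k), IsOpen W ∧ y ∈ W ∧
      ∃ u : Euc k → EReal, SuperharmOn u W ∧ u y < Filter.liminf u (𝓝[A \ {y}] y)

/-- A subset `A` of the unit sphere `S^{k-1}` is (spherically) polar, i.e. polar for the
intrinsic potential theory of the round sphere; equivalently (Fuglede), the radial
cone over `A` is polar in `ℝᵏ`. -/
def SphPolar {k : ℕ} (A : Set (Euc k)) : Prop :=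
  EucPolar {x : Euc k | x ≠ 0 ∧ ‖x‖⁻¹ • x ∈ A}

/-- The radial function of a set `U`, with values in `[0,+∞]`. -/
def radialE {k : ℕ} (U : Set (Euc k)) (θ : Euc k) : EReal :=
  sSup ((fun ρ : ℝ => (ρ : EReal)) '' {ρ : ℝ | 0 ≤ ρ ∧ ρ • θ ∈ U})

/-- `U` is a strictly starlike domain (with respect to the origin). -/
def IsStrictStar {k : ℕ} (U : Set (Euc k)) : Prop :=
  IsOpen U ∧ IsConnected U ∧ ∀ p ∈ closure U, ∀ t : ℝ, 0 ≤ t → t < 1 → t • p ∈ U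

/-- The filter of real numbers `ρ ↑ c` (for an extended real `c`). -/
def upFilter (c : EReal) : Filter ℝ :=
  Filter.comap (fun ρ : ℝ => (ρ : EReal)) (𝓝[<] c)

/-- The filter of real numbers `ρ ↓ c` (for an extended real `c`). -/
def downFilter (c : EReal) : Filter ℝ :=
  Filter.comap (fun ρ : ℝ => (ρ : EReal)) (𝓝[>] c)

/-- The filter describing the radial approach `ρ ↗ R(θ)` in a starlike domain. -/
def radialFilter {k : ℕ} (U : Set (Euc k)) (θ : Euc k) : Filter ℝ :=
  upFilter (radialE U θ) ⊓ 𝓟 (Ici (0:ℝ))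

/-- A second order partial differential operator
`L = ∑ aᵢⱼ ∂²/∂xᵢ∂xⱼ + ∑ bᵢ ∂/∂xᵢ + c` on a domain `Ω ⊆ ℝᵏ`, with
`aᵢⱼ = aⱼᵢ ∈ C^{2,1}`, `bᵢ ∈ C^{1,1}`, `c ∈ C^{0,1}`, `c ≤ 0`, and `(aᵢⱼ)`
positive definite on `Ω` (so `L` is elliptic). -/
structure EllipticOp (k : ℕ) (Ω : Set (Euc k)) where
  a : Fin k → Fin k → Euc k → ℝ
  b : Fin k → Euc k → ℝ
  c : Euc k → ℝ
  symm : ∀ i j x, a i j x = a j i x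
  a_C2 : ∀ i j, ContDiffOn ℝ 2 (a i j) Ω
  a_lip : ∀ i j, ∀ x ∈ Ω, ∃ t ∈ 𝓝 x, ∃ K : ℝ≥0,
    LipschitzOnWith K (iteratedFDerivWithin ℝ 2 (a i j) Ω) (t ∩ Ω)
  b_C1 : ∀ i, ContDiffOn ℝ 1 (b i) Ω
  b_lip : ∀ i, ∀ x ∈ Ω, ∃ t ∈ 𝓝 x, ∃ K : ℝ≥0,
    LipschitzOnWith K (iteratedFDerivWithin ℝ 1 (b i) Ω) (t ∩ Ω)
  c_C0 : ContinuousOn c Ω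
  c_lip : ∀ x ∈ Ω, ∃ t ∈ 𝓝 x, ∃ K : ℝ≥0, LipschitzOnWith K c (t ∩ Ω)
  c_nonpos : ∀ x ∈ Ω, c x ≤ 0
  posdef : ∀ x ∈ Ω, ∀ v : Fin k → ℝ, v ≠ 0 → 0 < ∑ i, ∑ j, a i j x * v i * v j

/-- The action of the operator `L` on a function `u`. -/
def EllipticOp.app {k : ℕ} {Ω : Set (Euc k)} (L : EllipticOp k Ω)
    (u : Euc k → ℝ) (x : Euc k) : ℝ :=
  (∑ i, ∑ j, L.a i j x *
      MixedDeriv2 u (EuclideanSpace.single i 1) (EuclideanSpace.single j 1) x) +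
    (∑ i, L.b i x * fderiv ℝ u x (EuclideanSpace.single i 1)) + L.c x * u x

/-- `u` is `L`-harmonic on the open set `U ⊆ Ω` : `u ∈ C²(U)` and `L u = 0` on `U`. -/
def LHarmOn {k : ℕ} {Ω : Set (Euc k)} (L : EllipticOp k Ω)
    (u : Euc k → ℝ) (U : Set (Euc k)) : Prop :=
  U ⊆ Ω ∧ IsOpen U ∧ ContDiffOn ℝ 2 u U ∧ ∀ x ∈ U, L.app u x = 0

/-- `u : Euc k → EReal` is `L`-superharmonic on the open set `W ⊆ Ω`
(comparison characterization of the lower semicontinuous distributional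
solutions of `L u ≤ 0`). -/
def LSuperharmOn {k : ℕ} {Ω : Set (Euc k)} (L : EllipticOp k Ω)
    (u : Euc k → EReal) (W : Set (Euc k)) : Prop :=
  W ⊆ Ω ∧ IsOpen W ∧ LowerSemicontinuousOn u W ∧ (∀ x ∈ W, u x ≠ ⊥) ∧
    (∀ x ∈ W, ∃ y ∈ connectedComponentIn W x, u y ≠ ⊤) ∧
    ∀ (x : Euc k) (r : ℝ), 0 < r → closedBall x r ⊆ W →
      ∀ h : Euc k → ℝ, ContinuousOn h (closedBall x r) → LHarmOn L h (ball x r) →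
        (∀ y ∈ sphere x r, (h y : EReal) ≤ u y) →
        ∀ y ∈ ball x r, (h y : EReal) ≤ u y

/-- There exists an `L`-superharmonic function `> 0` on `D` which is not `L`-harmonic. -/
def HasLPotentialOn {k : ℕ} {Ω : Set (Euc k)} (L : EllipticOp k Ω) (D : Set (Euc k)) : Prop :=
  ∃ u : Euc k → EReal, LSuperharmOn L u D ∧ (∀ x ∈ D, 0 < u x) ∧
    ¬ ∃ v : Euc k → ℝ, LHarmOn L v D ∧ ∀ x ∈ D, u x = (v x : EReal)

/-- `K` is an `L`-Mergelyan set in the domain `D`. -/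
def LMergelyan {k : ℕ} {Ω : Set (Euc k)} (L : EllipticOp k Ω) (D K : Set (Euc k)) : Prop :=
  IsCompact K ∧ K ⊆ D ∧
    ∀ u : Euc k → ℝ, ContinuousOn u K → LHarmOn L u (interior K) →
      ∀ ε : ℝ, 0 < ε → ∃ v : Euc k → ℝ, LHarmOn L v D ∧ ∀ x ∈ K, |v x - u x| < ε

/-- `S` is an `L`-Carleman set in the domain `D` (`S` is closed in `D`). -/
def LCarleman {k : ℕ} {Ω : Set (Euc k)} (L : EllipticOp k Ω) (D S : Set (Euc k)) : Prop :=
  S ⊆ D ∧ closure S ∩ D ⊆ S ∧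
    ∀ u : Euc k → ℝ, ContinuousOn u S → LHarmOn L u (interior S) →
      ∀ ε : Euc k → ℝ, ContinuousOn ε S → (∀ x ∈ S, ε x ∈ Ioc (0:ℝ) 1) →
        ∃ v : Euc k → ℝ, LHarmOn L v D ∧ ∀ x ∈ S, |v x - u x| < ε x

/-- `C` is a chaplet in the domain `D`: the union of a locally finite (in `D`) family of
pairwise disjoint, connected, compact `L`-Mergelyan sets contained in `D`, whose
complements in `ℝᵏ` are connected. -/
def LChaplet {k : ℕ} {Ω : Set (Euc k)} (L : EllipticOp k Ω) (D C : Set (Euc k)) : Prop :=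
  ∃ 𝒬 : Set (Set (Euc k)),
    C = ⋃₀ 𝒬 ∧
    (∀ x ∈ D, ∃ t ∈ 𝓝 x, {q ∈ 𝒬 | (q ∩ t).Nonempty}.Finite) ∧
    (𝒬.Pairwise Disjoint) ∧
    ∀ q ∈ 𝒬, IsCompact q ∧ IsConnected q ∧ q ⊆ D ∧ IsConnected qᶜ ∧ LMergelyan L D q

/-- The union of `F` with all of its holes (the bounded components of `D \ F`),
relative to the domain `D`. -/
def hullIn {k : ℕ} (D F : Set (Euc k)) : Set (Euc k) :=
  F ∪ {x | x ∈ D \ F ∧ IsCompact (closure (connectedComponentIn (D \ F) x)) ∧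
        closure (connectedComponentIn (D \ F) x) ⊆ D}


lemma starlike_scale {k : ℕ} {U : Set (Euc k)} (hU : IsStrictStar U)
    {θ : Euc k} {ρ σ : ℝ} (hρ : ρ • θ ∈ closure U) (h0 : 0 ≤ σ) (h1 : σ < ρ) :
    σ • θ ∈ U := by
  have hρ0 : 0 < ρ := lt_of_le_of_lt h0 h1
  have := hU.2.2 _ hρ (σ / ρ) (div_nonneg h0 hρ0.le) ((div_lt_one hρ0).2 h1)
  rwa [smul_smul, div_mul_cancel₀ _ hρ0.ne'] at this

lemma starlike_zero_mem {k : ℕ} {U : Set (Euc k)} (hU : IsStrictStar U) :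
    (0 : Euc k) ∈ U := by
  obtain ⟨p, hp⟩ := hU.2.1.nonempty
  have := hU.2.2 p (subset_closure hp) 0 le_rfl one_pos
  simpa using this

lemma radialE_nonneg {k : ℕ} {U : Set (Euc k)} (hU : IsStrictStar U) (θ : Euc k) :
    (0 : EReal) ≤ radialE U θ := by
  apply le_sSup
  exact ⟨0, ⟨le_rfl, by simpa using starlike_zero_mem hU⟩, rfl⟩

lemma le_radialE_of_mem_closure {k : ℕ} {U : Set (Euc k)} (hU : IsStrictStar U)
    {θ : Euc k} {ρ : ℝ} (h : ρ • θ ∈ closure U) :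
    (ρ : EReal) ≤ radialE U θ := by
  by_contra hc
  push_neg at hc
  obtain ⟨x, hx1, hx2⟩ := EReal.lt_iff_exists_real_btwn.1 hc
  have hx0 : (0 : ℝ) ≤ x := by
    have : (0 : EReal) ≤ (x : EReal) := le_trans (radialE_nonneg hU θ) hx1.le
    exact_mod_cast this
  have hmem : x • θ ∈ U := starlike_scale hU h hx0 (by exact_mod_cast hx2)
  have : (x : EReal) ≤ radialE U θ := le_sSup ⟨x, ⟨hx0, hmem⟩, rfl⟩
  exact absurd hx1 (not_lt.2 this)

lemma smul_mem_of_lt_radialE {k : ℕ} {U : Set (Euc k)} (hU : IsStrictStar U)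
    {θ : Euc k} {ρ : ℝ} (h0 : 0 ≤ ρ) (h : (ρ : EReal) < radialE U θ) :
    ρ • θ ∈ U := by
  obtain ⟨e, he, hlt⟩ := lt_sSup_iff.1 h
  obtain ⟨σ, ⟨hσ0, hσU⟩, rfl⟩ := he
  exact starlike_scale hU (subset_closure hσU) h0 (by simp only [] at hlt; exact_mod_cast show (ρ:EReal) < (σ:EReal) from hlt)

/-- The radial function `R : S^{n-1} → (0, +∞]` of a strictly starlike
domain is continuous (with the order topology on `[0, +∞]`, realized in `EReal`). -/
theorem strictStar_radial_continuous
    (n : ℕ) (hn : 2 ≤ n) (U : Set (Euc n)) (hU : IsStrictStar U) :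
    Continuous (fun θ : ↥(sphere (0 : Euc n) 1) => radialE U (θ : Euc n)) := by
  rw [continuous_iff_continuousAt]
  intro θ
  rw [ContinuousAt, tendsto_order]
  constructor
  · intro a ha
    rcases lt_or_ge a 0 with h | h
    · filter_upwards with θ'
      exact lt_of_lt_of_le h (radialE_nonneg hU _)
    · obtain ⟨ρ, hρ1, hρ2⟩ := EReal.lt_iff_exists_real_btwn.1 ha
      have hρ0 : (0 : ℝ) ≤ ρ := by
        have : (0 : EReal) ≤ (ρ : EReal) := le_trans h hρ1.le
        exact_mod_cast this
      have hmem : ρ • (θ : Euc n) ∈ U := smul_mem_of_lt_radialE hU hρ0 hρ2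
      have hcont : ContinuousAt (fun θ' : ↥(sphere (0 : Euc n) 1) => ρ • (θ' : Euc n)) θ :=
        (continuous_subtype_val.const_smul ρ).continuousAt
      have hev : ∀ᶠ θ' in 𝓝 θ, ρ • ((θ' : ↥(sphere (0 : Euc n) 1)) : Euc n) ∈ U :=
        hcont (hU.1.mem_nhds hmem)
      filter_upwards [hev] with θ' hθ'
      exact lt_of_lt_of_le hρ1 (le_sSup ⟨ρ, ⟨hρ0, hθ'⟩, rfl⟩)
  · intro c hc
    obtain ⟨ρ, hρ1, hρ2⟩ := EReal.lt_iff_exists_real_btwn.1 hc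
    have hρ0 : (0 : ℝ) ≤ ρ := by
      have : (0 : EReal) ≤ (ρ : EReal) := le_trans (radialE_nonneg hU _) hρ1.le
      exact_mod_cast this
    have hnot : ρ • (θ : Euc n) ∉ closure U := fun h =>
      absurd hρ1 (not_lt.2 (le_radialE_of_mem_closure hU h))
    have hcont : ContinuousAt (fun θ' : ↥(sphere (0 : Euc n) 1) => ρ • (θ' : Euc n)) θ :=
      (continuous_subtype_val.const_smul ρ).continuousAt
    have hev : ∀ᶠ θ' in 𝓝 θ, ρ • ((θ' : ↥(sphere (0 : Euc n) 1)) : Euc n) ∉ closure U :=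
      hcont (isClosed_closure.isOpen_compl.mem_nhds hnot)
    filter_upwards [hev] with θ' hθ'
    refine lt_of_le_of_lt ?_ hρ2
    apply sSup_le
    rintro e ⟨σ, ⟨hσ0, hσU⟩, rfl⟩
    by_contra hle
    push_neg at hle
    have hσρ : ρ < σ := by exact_mod_cast hle
    exact hθ' (subset_closure (starlike_scale hU (subset_closure hσU) hρ0 hσρ))

end
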